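/- Let D := ℝ + T·ℂ[[T]] be the subring of the formal power series ring ℂ[[T]] consisting of all power series whose constant term is real; its quotient field is the Laurent series field ℂ((T)). Then the valuation overrings of D, i.e., the valuation subrings of ℂ((T)) containing D, are exactly ℂ[[T]] and ℂ((T)). -/

import Mathlib

noncomputable section

open scoped Multiplicative
open scoped WithZero

/-- The pseudo-valuation domain `D = ℝ + T·ℂ[[T]]`, i.e. the set of formal power series
over `ℂ` whose constant term is real, viewed as a subset of the Laurent series field
`ℂ((T))`. -/
def pvdSet : Set (LaurentSeries ℂ) :=
  {x | ∃ f : PowerSeries ℂ, (∃ r : ℝ, PowerSeries.constantCoeff (R := ℂ) f = (r : ℂ)) ∧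
    x = algebraMap (PowerSeries ℂ) (LaurentSeries ℂ) f}

lemma pvd_range_mem (W : ValuationSubring (LaurentSeries ℂ))
    (h : pvdSet ⊆ (W : Set (LaurentSeries ℂ))) (f : PowerSeries ℂ) :
    algebraMap (PowerSeries ℂ) (LaurentSeries ℂ) f ∈ W := by
  set A := algebraMap (PowerSeries ℂ) (LaurentSeries ℂ)
  have hreal : ∀ r : ℝ, A (PowerSeries.C (R := ℂ) (r : ℂ)) ∈ W := fun r =>
    h ⟨PowerSeries.C (R := ℂ) (r : ℂ), ⟨r, by simp⟩, rfl⟩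
  have hI : A (PowerSeries.C (R := ℂ) Complex.I) ∈ W := by
    rcases W.mem_or_inv_mem (A (PowerSeries.C (R := ℂ) Complex.I)) with hw | hw
    · exact hw
    · have : (A (PowerSeries.C (R := ℂ) Complex.I))⁻¹ = - A (PowerSeries.C (R := ℂ) Complex.I) := by
        apply inv_eq_of_mul_eq_one_right
        have h2 : A (PowerSeries.C (R := ℂ) Complex.I) * A (PowerSeries.C (R := ℂ) Complex.I) = -1 := by
          rw [← map_mul, ← map_mul, Complex.I_mul_I]
          simp
        rw [show A (PowerSeries.C (R := ℂ) Complex.I) * -A (PowerSeries.C (R := ℂ) Complex.I)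
            = -(A (PowerSeries.C (R := ℂ) Complex.I) * A (PowerSeries.C (R := ℂ) Complex.I)) by ring, h2]
        simp
      rw [this] at hw
      simpa using W.neg_mem _ hw
  have h0 : A (f - PowerSeries.C (R := ℂ) (PowerSeries.constantCoeff (R := ℂ) f)) ∈ W := by
    refine h ⟨_, ⟨0, ?_⟩, rfl⟩
    simp
  set c := PowerSeries.constantCoeff (R := ℂ) f
  have hc : PowerSeries.C (R := ℂ) c = PowerSeries.C (R := ℂ) (c.re : ℂ) +
      PowerSeries.C (R := ℂ) (c.im : ℂ) * PowerSeries.C (R := ℂ) Complex.I := by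
    rw [← map_mul, ← map_add]
    congr 1
    exact (Complex.re_add_im c).symm
  have hC : A (PowerSeries.C (R := ℂ) c) ∈ W := by
    rw [hc, map_add, map_mul]
    exact W.add_mem _ _ (hreal _) (W.mul_mem _ _ (hreal _) hI)
  have heq : A f = A (PowerSeries.C (R := ℂ) c) + A (f - PowerSeries.C (R := ℂ) c) := by
    rw [← map_add, add_sub_cancel]
  rw [heq]
  exact W.add_mem _ _ hC h0

lemma mem_range_iff_val_le_one (y : LaurentSeries ℂ) :
    y ∈ Set.range (algebraMap (PowerSeries ℂ) (LaurentSeries ℂ)) ↔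
      Valued.v y ≤ (1 : ℤᵐ⁰) := by
  rw [LaurentSeries.val_le_one_iff_eq_coe]
  exact ⟨fun ⟨F, hF⟩ => ⟨F, hF⟩, fun ⟨F, hF⟩ => ⟨F, hF⟩⟩

/-- The valuation overrings of `D = ℝ + T·ℂ[[T]]` inside `ℂ((T))` are
exactly `ℂ[[T]]` and `ℂ((T))`. -/
theorem stmt17 (W : ValuationSubring (LaurentSeries ℂ)) :
    pvdSet ⊆ (W : Set (LaurentSeries ℂ)) ↔
      ((W : Set (LaurentSeries ℂ))
          = Set.range (algebraMap (PowerSeries ℂ) (LaurentSeries ℂ)) ∨ W = ⊤) := by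
  constructor
  · intro h
    have hrange : Set.range (algebraMap (PowerSeries ℂ) (LaurentSeries ℂ)) ⊆
        (W : Set (LaurentSeries ℂ)) := by
      rintro _ ⟨f, rfl⟩
      exact pvd_range_mem W h f
    by_cases hW : ∃ x ∈ W, ¬ Valued.v x ≤ (1 : ℤᵐ⁰)
    · right
      obtain ⟨x, hxW, hx⟩ := hW
      have hx1 : (1 : ℤᵐ⁰) < Valued.v x := not_le.mp hx
      have hx0 : x ≠ 0 := by
        intro h0
        rw [h0, map_zero] at hx1
        exact absurd hx1 (by simp)
      ext y
      simp only [ValuationSubring.mem_top, iff_true]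
      by_cases hy : Valued.v y ≤ (1 : ℤᵐ⁰)
      · exact hrange ((mem_range_iff_val_le_one y).mpr hy)
      · have hy1 : (1 : ℤᵐ⁰) < Valued.v y := not_le.mp hy
        have hy0 : y ≠ 0 := by
          intro h0
          rw [h0, map_zero] at hy1
          exact absurd hy1 (by simp)
        obtain ⟨a, ha⟩ := WithZero.ne_zero_iff_exists.mp (show Valued.v x ≠ (0 : ℤᵐ⁰) from (Valuation.ne_zero_iff _).mpr hx0)
        obtain ⟨b, hb⟩ := WithZero.ne_zero_iff_exists.mp (show Valued.v y ≠ (0 : ℤᵐ⁰) from (Valuation.ne_zero_iff _).mpr hy0)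
        set n : ℕ := (Multiplicative.toAdd b).natAbs
        have han : Valued.v y ≤ (Valued.v x) ^ n := by
          rw [← ha, ← hb, ← WithZero.coe_pow, WithZero.coe_le_coe]
          rw [← Multiplicative.toAdd_le, toAdd_pow]
          have ha1 : (1 : ℤ) ≤ Multiplicative.toAdd a := by
            have := hx1
            rw [← ha, ← WithZero.coe_one, WithZero.coe_lt_coe, ← Multiplicative.toAdd_lt] at this
            simp at this
            omega
          calc Multiplicative.toAdd b ≤ (n : ℤ) := Int.le_natAbs
            _ = (n : ℤ) * 1 := by ring
            _ ≤ (n : ℤ) • Multiplicative.toAdd a := by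
                rw [smul_eq_mul]
                exact mul_le_mul_of_nonneg_left ha1 (by positivity)
        have hval : Valued.v (y * (x⁻¹) ^ n) ≤ (1 : ℤᵐ⁰) := by
          rw [map_mul, map_pow, map_inv₀]
          rw [inv_pow]
          exact mul_inv_le_one_of_le₀ han zero_le'
        have hmem : y * (x⁻¹) ^ n ∈ W := hrange ((mem_range_iff_val_le_one _).mpr hval)
        have : y = (y * (x⁻¹) ^ n) * x ^ n := by
          field_simp
          rw [← mul_pow, one_div, inv_mul_cancel₀ hx0, one_pow]
        rw [this]
        exact W.mul_mem _ _ hmem (pow_mem hxW n)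
    · left
      push_neg at hW
      ext y
      exact ⟨fun hy => (mem_range_iff_val_le_one y).mpr (hW y hy), fun hy => hrange hy⟩
  · rintro (h | h)
    · rintro x ⟨f, _, rfl⟩
      rw [show (W : Set (LaurentSeries ℂ)) = _ from h]
      exact Set.mem_range_self f
    · rintro x -
      rw [h]
      trivial


end
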